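/- arXiv:2109.15288 — 5 statements merged into one kernel-verified Lean document; each statement's English description precedes it below -/
import Mathlib

section
/- The function η ↦ [η·ln(1 + 1/η)] / [1 − η·ln(1 + 1/η)] is strictly increasing on (0, ∞) and tends to +∞ as η → ∞. -/
open Filter Topology

lemma aux_log_lt {η : ℝ} (hη : 0 < η) : Real.log (1 + 1 / η) < 1 / η := by
  have h := Real.log_lt_sub_one_of_pos (x := 1 + 1/η) (by positivity)
    (by nlinarith [one_div_pos.mpr hη])
  linarith

lemma aux_log_gt {η : ℝ} (hη : 0 < η) : 1 / (η + 1) < Real.log (1 + 1 / η) := by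
  have hpos : (0:ℝ) < 1 + 1/η := by positivity
  have h := Real.log_lt_sub_one_of_pos (x := (1 + 1/η)⁻¹) (by positivity)
    (by
      have h1 : (1:ℝ) < 1 + 1/η := by nlinarith [one_div_pos.mpr hη]
      intro h; rw [inv_eq_one] at h; linarith)
  rw [Real.log_inv] at h
  have hinv : (1 + 1/η)⁻¹ = η / (η + 1) := by field_simp
  rw [hinv] at h
  have : η / (η + 1) - 1 = -(1/(η+1)) := by field_simp; ring
  linarith [this ▸ h]

lemma aux_deriv {η : ℝ} (hη : 0 < η) :
    HasDerivAt (fun η : ℝ => η * Real.log (1 + 1 / η))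
      (Real.log (1 + 1 / η) - 1 / (η + 1)) η := by
  have hpos : (0:ℝ) < 1 + 1/η := by positivity
  have hd : HasDerivAt (fun x : ℝ => 1 + 1 / x) (-(η^2)⁻¹) η := by
    simpa [one_div] using (hasDerivAt_inv hη.ne').const_add (1:ℝ)
  have hlog : HasDerivAt (fun x : ℝ => Real.log (1 + 1 / x))
      (-(η^2)⁻¹ / (1 + 1/η)) η := hd.log hpos.ne'
  have : HasDerivAt (fun x : ℝ => x * Real.log (1 + 1 / x))
      (1 * Real.log (1 + 1 / η) + η * (-(η ^ 2)⁻¹ / (1 + 1 / η))) η := (hasDerivAt_id η).mul hlog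
  convert this using 1
  field_simp
  ring

lemma aux_glt1 {η : ℝ} (hη : 0 < η) : η * Real.log (1 + 1 / η) < 1 := by
  have := aux_log_lt hη
  calc η * Real.log (1 + 1/η) < η * (1/η) := by
        exact mul_lt_mul_of_pos_left this hη
    _ = 1 := by field_simp

lemma aux_gpos {η : ℝ} (hη : 0 < η) : 0 < η * Real.log (1 + 1 / η) :=
  mul_pos hη (Real.log_pos (by nlinarith [one_div_pos.mpr hη]))

lemma aux_gmono : StrictMonoOn (fun η : ℝ => η * Real.log (1 + 1 / η)) (Set.Ioi 0) := by
  apply strictMonoOn_of_deriv_pos (convex_Ioi 0)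
  · exact fun x hx => ((aux_deriv hx).continuousAt).continuousWithinAt
  · intro x hx
    rw [interior_Ioi] at hx
    rw [(aux_deriv hx).deriv]
    have := aux_log_gt hx
    linarith

theorem stmt_6 :
    StrictMonoOn
        (fun η : ℝ =>
          (η * Real.log (1 + 1 / η)) / (1 - η * Real.log (1 + 1 / η)))
        (Set.Ioi 0) ∧
      Tendsto
        (fun η : ℝ =>
          (η * Real.log (1 + 1 / η)) / (1 - η * Real.log (1 + 1 / η)))
        atTop atTop := by
  constructor
  · intro a ha b hb hab
    simp only
    have hga := aux_gpos (Set.mem_Ioi.mp ha)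
    have hgb := aux_gpos (Set.mem_Ioi.mp hb)
    have hga1 := aux_glt1 (Set.mem_Ioi.mp ha)
    have hgb1 := aux_glt1 (Set.mem_Ioi.mp hb)
    have hlt := aux_gmono ha hb hab
    simp only at hlt
    rw [div_lt_div_iff₀ (by linarith) (by linarith)]
    nlinarith
  · have hg : Tendsto (fun η : ℝ => η * Real.log (1 + 1 / η)) atTop (𝓝 1) := by
      simpa using Real.tendsto_mul_log_one_add_div_atTop 1
    have h1 : Tendsto (fun η : ℝ => 1 - η * Real.log (1 + 1 / η)) atTop (𝓝[>] 0) := by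
      apply tendsto_nhdsWithin_of_tendsto_nhds_of_eventually_within
      · simpa using (tendsto_const_nhds (x := (1:ℝ))).sub hg
      · filter_upwards [eventually_gt_atTop 0] with η hη
        have := aux_glt1 hη
        rw [Set.mem_Ioi, one_div] at *
        linarith
    have hinv : Tendsto (fun η : ℝ => (1 - η * Real.log (1 + 1 / η))⁻¹) atTop atTop :=
      tendsto_inv_nhdsGT_zero.comp h1
    have := hg.pos_mul_atTop one_pos hinv
    simpa [div_eq_mul_inv] using this
end

section
/- Suppose F is a cumulative distribution function on [p_low, p_high] with F(p) = 1 + η − η·p_high/p for p ∈ [p_low, p_high], where η > 0 and p_low = (η/(1+η))·p_high. Then the expected value E[p] = p_high − ∫_{p_low}^{p_high} F(p) dp equals η·p_high·ln(1 + 1/η). -/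
theorem stmt_10 (η phigh plow : ℝ) (hη : 0 < η) (hp : 0 < phigh)
    (hplow : plow = (η / (1 + η)) * phigh)
    (F : ℝ → ℝ) (hF : ∀ p, F p = 1 + η - η * phigh / p) :
    phigh - ∫ p in plow..phigh, F p = η * phigh * Real.log (1 + 1 / η) := by
  have h1η : (0:ℝ) < 1 + η := by linarith
  have hplow0 : 0 < plow := by
    rw [hplow]; positivity
  have hnot : (0:ℝ) ∉ Set.uIcc plow phigh := by
    rw [Set.mem_uIcc]; push_neg
    constructor <;> intro h <;> linarith
  have hint : (∫ p in plow..phigh, F p)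
      = (∫ p in plow..phigh, (1 + η)) - η * phigh * ∫ p in plow..phigh, 1 / p := by
    have : ∀ p ∈ Set.uIcc plow phigh, F p = (1 + η) - η * phigh * (1 / p) := by
      intro p hp'
      rw [hF]; ring
    rw [intervalIntegral.integral_congr this,
      intervalIntegral.integral_sub (intervalIntegrable_const)]
    · rw [intervalIntegral.integral_const_mul]
    · exact (intervalIntegral.intervalIntegrable_one_div (fun x hx => fun h0 => hnot (h0 ▸ hx))
        (by fun_prop)).const_mul _
  rw [hint, integral_one_div hnot, intervalIntegral.integral_const]
  have hlog : Real.log (phigh / plow) = Real.log (1 + 1 / η) := by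
    congr 1
    rw [hplow]
    field_simp
    ring
  have h2 : (phigh - plow) • (1 + η) = phigh := by
    rw [hplow, smul_eq_mul]
    field_simp
    ring
  rw [hlog, h2]
  ring
end

section
/- Suppose F(p) = 1 + η − η·p_high/p on [p_low, p_high] with η > 0 and p_low = (η/(1+η))·p_high. Then ∫_{p_low}^{p_high} F(p) dp − ∫_{p_low}^{p_high} F(p)² dp = η·p_high·((1+2η)·ln(1 + 1/η) − 2). -/
theorem stmt_11 (η phigh plow : ℝ) (hη : 0 < η) (hp : 0 < phigh)
    (hplow : plow = (η / (1 + η)) * phigh)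
    (F : ℝ → ℝ) (hF : ∀ p, F p = 1 + η - η * phigh / p) :
    (∫ p in plow..phigh, F p) - ∫ p in plow..phigh, (F p) ^ 2
      = η * phigh * ((1 + 2 * η) * Real.log (1 + 1 / η) - 2) := by
  have hη1 : 0 < 1 + η := by linarith
  have hplow_pos : 0 < plow := by
    rw [hplow]; positivity
  have hle : plow ≤ phigh := by
    rw [hplow]
    nlinarith [div_le_one_of_le₀ (by linarith : η ≤ 1 + η) hη1.le]
  have hmem : ∀ p ∈ Set.uIcc plow phigh, 0 < p := by
    intro p hp'
    rw [Set.uIcc_of_le hle] at hp'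
    linarith [hp'.1]
  -- antiderivative of F
  set c : ℝ := η * phigh with hc
  have hderiv1 : ∀ p ∈ Set.uIcc plow phigh,
      HasDerivAt (fun q => (1 + η) * q - c * Real.log q) (F p) p := by
    intro p hp'
    have hppos := hmem p hp'
    have h1 : HasDerivAt (fun q : ℝ => (1 + η) * q) (1 + η) p := by
      simpa using (hasDerivAt_id p).const_mul (1 + η)
    have h2 : HasDerivAt (fun q : ℝ => c * Real.log q) (c * p⁻¹) p :=
      (Real.hasDerivAt_log hppos.ne').const_mul c
    have := h1.sub h2
    refine this.congr_deriv ?_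
    symm
    rw [hF]
    field_simp
  have hderiv2 : ∀ p ∈ Set.uIcc plow phigh,
      HasDerivAt (fun q => (1 + η) ^ 2 * q - 2 * (1 + η) * c * Real.log q - c ^ 2 * q⁻¹)
        ((F p) ^ 2) p := by
    intro p hp'
    have hppos := hmem p hp'
    have h1 : HasDerivAt (fun q : ℝ => (1 + η) ^ 2 * q) ((1 + η) ^ 2) p := by
      simpa using (hasDerivAt_id p).const_mul ((1 + η) ^ 2)
    have h2 : HasDerivAt (fun q : ℝ => 2 * (1 + η) * c * Real.log q)
        (2 * (1 + η) * c * p⁻¹) p :=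
      (Real.hasDerivAt_log hppos.ne').const_mul _
    have h3 : HasDerivAt (fun q : ℝ => c ^ 2 * q⁻¹) (c ^ 2 * (-(p ^ 2)⁻¹)) p :=
      (hasDerivAt_inv hppos.ne').const_mul (c ^ 2)
    have := (h1.sub h2).sub h3
    refine this.congr_deriv ?_
    symm
    rw [hF]
    field_simp
    ring
  have hcont : ContinuousOn F (Set.uIcc plow phigh) := by
    have : ContinuousOn (fun p : ℝ => 1 + η - η * phigh / p) (Set.uIcc plow phigh) := by
      apply ContinuousOn.sub continuousOn_const
      exact ContinuousOn.div continuousOn_const continuousOn_id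
        (fun p hp' => (hmem p hp').ne')
    exact this.congr (fun p _ => hF p)
  have hint1 : IntervalIntegrable F MeasureTheory.volume plow phigh :=
    hcont.intervalIntegrable
  have hint2 : IntervalIntegrable (fun p => (F p) ^ 2) MeasureTheory.volume plow phigh :=
    (hcont.pow 2).intervalIntegrable
  have I1 : (∫ p in plow..phigh, F p)
      = ((1 + η) * phigh - c * Real.log phigh) - ((1 + η) * plow - c * Real.log plow) :=
    intervalIntegral.integral_eq_sub_of_hasDerivAt hderiv1 hint1
  have I2 : (∫ p in plow..phigh, (F p) ^ 2)
      = ((1 + η) ^ 2 * phigh - 2 * (1 + η) * c * Real.log phigh - c ^ 2 * phigh⁻¹)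
        - ((1 + η) ^ 2 * plow - 2 * (1 + η) * c * Real.log plow - c ^ 2 * plow⁻¹) :=
    intervalIntegral.integral_eq_sub_of_hasDerivAt hderiv2 hint2
  -- log identities
  have hlog : Real.log phigh - Real.log plow = Real.log (1 + 1 / η) := by
    rw [← Real.log_div hp.ne' hplow_pos.ne', hplow]
    congr 1
    field_simp
    ring
  rw [I1, I2, hc]
  have hinv : plow⁻¹ = (1 + η) / (η * phigh) := by
    rw [hplow]; field_simp
  rw [hinv, hplow]
  have h2 : Real.log phigh = Real.log plow + Real.log (1 + 1 / η) := by linarith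
  rw [hplow] at h2
  rw [h2]
  field_simp
  ring
end

section
/- Let F be an atomless CDF on [a,b] with 0 < a < b and F strictly increasing. Then the equation F(ρ)·(ρ − E[p | p ≤ ρ]) = s has at most one solution ρ ∈ [a,b] for any s > 0. -/
open MeasureTheory

theorem stmt_16 (a b : ℝ) (ha : 0 < a) (hab : a < b)
    (μ : Measure ℝ) [IsProbabilityMeasure μ] [NullSingletonClass μ]
    (hsupp : μ (Set.Icc a b)ᶜ = 0)
    (F : ℝ → ℝ) (hF : ∀ ρ, F ρ = (μ (Set.Iic ρ)).toReal)
    (hmono : StrictMonoOn F (Set.Icc a b))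
    (condExp : ℝ → ℝ)
    (hcond : ∀ ρ, condExp ρ = (∫ x in Set.Iic ρ, x ∂μ) / F ρ)
    (s : ℝ) (hs : 0 < s) :
    ∀ ρ₁ ∈ Set.Icc a b, ∀ ρ₂ ∈ Set.Icc a b,
      F ρ₁ * (ρ₁ - condExp ρ₁) = s → F ρ₂ * (ρ₂ - condExp ρ₂) = s →
        ρ₁ = ρ₂ := by
  have hae : ∀ᵐ x ∂μ, x ∈ Set.Icc a b := by
    rw [MeasureTheory.ae_iff]
    exact hsupp
  have hint : Integrable (fun x : ℝ => x) μ := by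
    refine (integrable_const b).mono' aestronglyMeasurable_id ?_
    filter_upwards [hae] with x hx
    rw [Real.norm_eq_abs]
    exact abs_le.mpr ⟨by linarith [hx.1], hx.2⟩
  -- key monotonicity step
  have key : ∀ ρ₁ ρ₂ : ℝ, ρ₁ < ρ₂ → 0 < F ρ₁ →
      F ρ₁ * ρ₁ - (∫ x in Set.Iic ρ₁, x ∂μ) <
      F ρ₂ * ρ₂ - (∫ x in Set.Iic ρ₂, x ∂μ) := by
    intro ρ₁ ρ₂ hlt hFpos
    have hdisj : Disjoint (Set.Iic ρ₁) (Set.Ioc ρ₁ ρ₂) := Set.Iic_disjoint_Ioc le_rfl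
    have hunion : Set.Iic ρ₁ ∪ Set.Ioc ρ₁ ρ₂ = Set.Iic ρ₂ := Set.Iic_union_Ioc_eq_Iic hlt.le
    have hmsum : (μ (Set.Ioc ρ₁ ρ₂)).toReal = F ρ₂ - F ρ₁ := by
      have : μ (Set.Iic ρ₁ ∪ Set.Ioc ρ₁ ρ₂) = μ (Set.Iic ρ₁) + μ (Set.Ioc ρ₁ ρ₂) :=
        measure_union hdisj measurableSet_Ioc
      rw [hunion] at this
      rw [hF, hF, this, ENNReal.toReal_add (measure_ne_top μ _) (measure_ne_top μ _)]
      ring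
    have hisum : (∫ x in Set.Iic ρ₂, x ∂μ) =
        (∫ x in Set.Iic ρ₁, x ∂μ) + ∫ x in Set.Ioc ρ₁ ρ₂, x ∂μ := by
      rw [← hunion, setIntegral_union hdisj measurableSet_Ioc hint.integrableOn hint.integrableOn]
    have hbound : (∫ x in Set.Ioc ρ₁ ρ₂, x ∂μ) ≤ ρ₂ * (F ρ₂ - F ρ₁) := by
      calc (∫ x in Set.Ioc ρ₁ ρ₂, x ∂μ) ≤ ∫ _ in Set.Ioc ρ₁ ρ₂, ρ₂ ∂μ := by
            refine setIntegral_mono_on hint.integrableOn (integrable_const ρ₂).integrableOn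
              measurableSet_Ioc (fun x hx => hx.2)
        _ = (μ (Set.Ioc ρ₁ ρ₂)).toReal * ρ₂ := by rw [setIntegral_const, smul_eq_mul, Measure.real]
        _ = ρ₂ * (F ρ₂ - F ρ₁) := by rw [hmsum]; ring
    have hF2 : F ρ₁ ≤ F ρ₂ := by
      have := hmsum
      have h0 : (0:ℝ) ≤ (μ (Set.Ioc ρ₁ ρ₂)).toReal := ENNReal.toReal_nonneg
      linarith
    nlinarith
  have heq : ∀ ρ : ℝ, F ρ * (ρ - condExp ρ) = s →
      0 < F ρ ∧ F ρ * ρ - (∫ x in Set.Iic ρ, x ∂μ) = s := by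
    intro ρ h
    have hFne : F ρ ≠ 0 := by
      intro h0; rw [h0, zero_mul] at h; linarith
    have hFpos : 0 < F ρ := lt_of_le_of_ne (by rw [hF]; exact ENNReal.toReal_nonneg) (Ne.symm hFne)
    refine ⟨hFpos, ?_⟩
    rw [hcond, mul_sub, mul_div_cancel₀ _ hFne] at h
    exact h
  intro ρ₁ hρ₁ ρ₂ hρ₂ h₁ h₂
  obtain ⟨hF1, he1⟩ := heq ρ₁ h₁
  obtain ⟨hF2, he2⟩ := heq ρ₂ h₂
  by_contra hne
  rcases lt_or_gt_of_ne hne with h | h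
  · have := key ρ₁ ρ₂ h hF1; linarith
  · have := key ρ₂ ρ₁ h hF2; linarith
end

section
/- Let t be a probability distribution on {1,...,K} and q ∈ (0,1). Define η(q) = [q/2 + δ·(1−q)·(τ(1−q/2) − τ(1−q)/2)] / [δ·(1−q)·(1 + τ(1−q) − 2τ(1−q/2))], where τ(x) = ∑_k t(k)x^k and δ ∈ (0,1). If t(k) > 0 for some k ≥ 2, then η(q) > 0 for all q ∈ (0,1), and η(q) → ∞ as q → 1⁻ and as q → 0⁺. -/
open Filter Topology

theorem stmt_18 (K : ℕ) (t : ℕ → ℝ) (ht : ∀ k, 0 ≤ t k)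
    (hsupp : ∀ k, t k ≠ 0 → k ∈ Finset.Icc 1 K)
    (hsum : ∑ k ∈ Finset.Icc 1 K, t k = 1)
    (δ : ℝ) (hδ : δ ∈ Set.Ioo (0 : ℝ) 1)
    (τ : ℝ → ℝ) (hτ : ∀ x, τ x = ∑ k ∈ Finset.Icc 1 K, t k * x ^ k)
    (hk2 : ∃ k, 2 ≤ k ∧ k ≤ K ∧ 0 < t k)
    (η : ℝ → ℝ)
    (hη : ∀ q : ℝ, η q =
      (q / 2 + δ * (1 - q) * (τ (1 - q / 2) - τ (1 - q) / 2)) /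
        (δ * (1 - q) * (1 + τ (1 - q) - 2 * τ (1 - q / 2)))) :
    (∀ q ∈ Set.Ioo (0 : ℝ) 1, 0 < η q) ∧
      Tendsto η (𝓝[<] 1) atTop ∧ Tendsto η (𝓝[>] 0) atTop := by
  obtain ⟨hδ0, hδ1⟩ := hδ
  set N : ℝ → ℝ := fun q => q / 2 + δ * (1 - q) * (τ (1 - q / 2) - τ (1 - q) / 2) with hN
  set D : ℝ → ℝ := fun q => δ * (1 - q) * (1 + τ (1 - q) - 2 * τ (1 - q / 2)) with hD
  have hηND : ∀ q, η q = N q / D q := hη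
  -- basic facts about τ
  have hτcont : Continuous τ := by
    have h : τ = fun x => ∑ k ∈ Finset.Icc 1 K, t k * x ^ k := funext hτ
    rw [h]
    exact continuous_finset_sum _ fun k _ => by fun_prop
  have hτ1 : τ 1 = 1 := by rw [hτ]; simpa using hsum
  have hτnonneg : ∀ x : ℝ, 0 ≤ x → 0 ≤ τ x := by
    intro x hx
    rw [hτ]
    exact Finset.sum_nonneg fun k _ => mul_nonneg (ht k) (pow_nonneg hx k)
  have hτmono : ∀ a b : ℝ, 0 ≤ a → a ≤ b → τ a ≤ τ b := by
    intro a b ha hab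
    rw [hτ, hτ]
    exact Finset.sum_le_sum fun k _ =>
      mul_le_mul_of_nonneg_left (pow_le_pow_left₀ ha hab k) (ht k)
  -- strict midpoint convexity: the denominator factor is positive on (0,1)
  have hconv : ∀ q : ℝ, q ∈ Set.Ioo (0:ℝ) 1 → 0 < 1 + τ (1 - q) - 2 * τ (1 - q / 2) := by
    rintro q ⟨hq0, hq1⟩
    set a : ℝ := 1 - q with ha
    have ha0 : 0 ≤ a := by simp only [ha]; linarith
    have ha1 : a < 1 := by simp only [ha]; linarith
    have hmid : (1 : ℝ) - q / 2 = (1/2 : ℝ) * a + (1/2 : ℝ) * 1 := by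
      simp only [ha]; ring
    have hexpand : ∑ k ∈ Finset.Icc 1 K, t k * (1 + a ^ k - 2 * ((1:ℝ) - q / 2) ^ k)
        = (∑ k ∈ Finset.Icc 1 K, t k) + τ (1 - q) - 2 * τ (1 - q / 2) := by
      rw [hτ, hτ, ← ha, Finset.mul_sum, ← Finset.sum_add_distrib, ← Finset.sum_sub_distrib]
      exact Finset.sum_congr rfl fun k _ => by ring
    have key : 0 < ∑ k ∈ Finset.Icc 1 K, t k * (1 + a ^ k - 2 * ((1:ℝ) - q / 2) ^ k) := ?_
    · rw [hexpand, hsum] at key; linarith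
    obtain ⟨k₂, hk₂2, hk₂K, hk₂pos⟩ := hk2
    apply Finset.sum_pos' ?_ ⟨k₂, Finset.mem_Icc.2 ⟨by omega, hk₂K⟩, ?_⟩
    · intro k _
      have h := (convexOn_pow (𝕜 := ℝ) k).2 (Set.mem_Ici.2 ha0) (Set.mem_Ici.2 zero_le_one)
        (by norm_num : (0:ℝ) ≤ 1/2) (by norm_num : (0:ℝ) ≤ 1/2) (by norm_num)
      simp only [smul_eq_mul, one_pow] at h
      rw [hmid]
      have : 0 ≤ 1 + a ^ k - 2 * ((1:ℝ)/2 * a + 1/2 * 1) ^ k := by linarith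
      exact mul_nonneg (ht k) this
    · have h := (strictConvexOn_pow hk₂2).2 (Set.mem_Ici.2 ha0) (Set.mem_Ici.2 zero_le_one)
        (ne_of_lt ha1) (by norm_num : (0:ℝ) < 1/2) (by norm_num : (0:ℝ) < 1/2) (by norm_num)
      simp only [smul_eq_mul, one_pow] at h
      rw [hmid]
      have : 0 < 1 + a ^ k₂ - 2 * ((1:ℝ)/2 * a + 1/2 * 1) ^ k₂ := by linarith
      exact mul_pos hk₂pos this
  -- positivity of N and D on (0,1)
  have hDpos : ∀ q : ℝ, q ∈ Set.Ioo (0:ℝ) 1 → 0 < D q := by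
    rintro q hq
    exact mul_pos (mul_pos hδ0 (by linarith [hq.2])) (hconv q hq)
  have hNpos : ∀ q : ℝ, q ∈ Set.Ioo (0:ℝ) 1 → 0 < N q := by
    rintro q ⟨hq0, hq1⟩
    have h1 : τ (1 - q) ≤ τ (1 - q / 2) := hτmono _ _ (by linarith) (by linarith)
    have h2 : 0 ≤ τ (1 - q) := hτnonneg _ (by linarith)
    have h3 : 0 ≤ τ (1 - q / 2) - τ (1 - q) / 2 := by linarith
    have : 0 ≤ δ * (1 - q) * (τ (1 - q / 2) - τ (1 - q) / 2) :=
      mul_nonneg (mul_nonneg hδ0.le (by linarith)) h3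
    simp only [hN]
    linarith
  refine ⟨fun q hq => by rw [hηND]; exact div_pos (hNpos q hq) (hDpos q hq), ?_, ?_⟩
  -- continuity of N and D
  all_goals
    have hDcont : Continuous D := by
      apply Continuous.mul
      · fun_prop
      · exact ((continuous_const.add (hτcont.comp (by fun_prop))).sub
          (continuous_const.mul (hτcont.comp (by fun_prop))))
    have hNcont : Continuous N := by
      apply Continuous.add
      · fun_prop
      · exact (continuous_const.mul (by fun_prop)).mul
          ((hτcont.comp (by fun_prop)).sub ((hτcont.comp (by fun_prop)).div_const 2))
  · -- q → 1⁻
    have hD1 : Tendsto D (𝓝[<] 1) (𝓝[>] 0) := by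
      rw [tendsto_nhdsWithin_iff]
      constructor
      · have h0 : Tendsto D (𝓝 1) (𝓝 (D 1)) := hDcont.tendsto 1
        rw [show D 1 = 0 by norm_num [hD]] at h0
        exact h0.mono_left nhdsWithin_le_nhds
      · filter_upwards [Ioo_mem_nhdsLT_of_mem (by norm_num : (1:ℝ) ∈ Set.Ioc (0:ℝ) 1)]
          with q hq
        exact hDpos q hq
    have hN1 : Tendsto N (𝓝[<] 1) (𝓝 (1/2 : ℝ)) := by
      have h0 : Tendsto N (𝓝 1) (𝓝 (N 1)) := hNcont.tendsto 1
      rw [show N 1 = 1/2 by norm_num [hN]] at h0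
      exact h0.mono_left nhdsWithin_le_nhds
    have := Tendsto.pos_mul_atTop (by norm_num : (0:ℝ) < 1/2) hN1
      (tendsto_inv_nhdsGT_zero.comp hD1)
    refine this.congr fun q => ?_
    rw [hηND]
    simp [div_eq_mul_inv, Function.comp]
  · -- q → 0⁺
    have hD0 : Tendsto D (𝓝[>] 0) (𝓝[>] 0) := by
      rw [tendsto_nhdsWithin_iff]
      constructor
      · have h0 : Tendsto D (𝓝 0) (𝓝 (D 0)) := hDcont.tendsto 0
        rw [show D 0 = 0 by norm_num [hD, hτ1]] at h0
        exact h0.mono_left nhdsWithin_le_nhds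
      · filter_upwards [Ioo_mem_nhdsGT_of_mem (by norm_num : (0:ℝ) ∈ Set.Ico (0:ℝ) 1)]
          with q hq
        exact hDpos q hq
    have hN0 : Tendsto N (𝓝[>] 0) (𝓝 (δ/2 : ℝ)) := by
      have h0 : Tendsto N (𝓝 0) (𝓝 (N 0)) := hNcont.tendsto 0
      rw [show N 0 = δ/2 by norm_num [hN, hτ1]; ring] at h0
      exact h0.mono_left nhdsWithin_le_nhds
    have := Tendsto.pos_mul_atTop (by positivity : (0:ℝ) < δ/2) hN0
      (tendsto_inv_nhdsGT_zero.comp hD0)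
    refine this.congr fun q => ?_
    rw [hηND]
    simp [div_eq_mul_inv, Function.comp]
end
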